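/- For every unit vector Ψ ∈ V, writing c = ‖Ψ − ⟨v, Ψ⟩v‖ (so 0 ≤ c ≤ 1), the expectation value of H satisfies ⟨Ψ, HΨ⟩ ≥ (1 − c²)ω₋ + c²ω₊ − 2c√(1 − c²)·b. -/

import Mathlib

/-- For every unit vector `Ψ ∈ V`, writing `c = ‖Ψ − ⟨v, Ψ⟩v‖`, the expectation
value of `H` satisfies `⟨Ψ, HΨ⟩ ≥ (1 − c²)ω₋ + c²ω₊ − 2c√(1 − c²)·b`.
Here `ωm = ω₋`, `ωp = ω₊`. -/
theorem expectation_value_lower_bound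
    {V : Type*} [NormedAddCommGroup V] [InnerProductSpace ℂ V] [FiniteDimensional ℂ V]
    (H : V →ₗ[ℂ] V) (hH : H.IsSymmetric)
    (v : V) (hv : ‖v‖ = 1)
    (ωm ωp b : ℝ) (hω : ωm < ωp) (hb : 0 ≤ b)
    (hdiag : (inner ℂ v (H v) : ℂ) = (ωm : ℂ))
    (hperp : ∀ φ : V, (inner ℂ v φ : ℂ) = 0 → ωp * ‖φ‖ ^ 2 ≤ ((inner ℂ φ (H φ) : ℂ)).re)
    (hoff : ∀ φ : V, (inner ℂ v φ : ℂ) = 0 → ‖inner ℂ v (H φ)‖ ≤ b * ‖φ‖) :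
    ∀ Ψ : V, ‖Ψ‖ = 1 →
      (1 - ‖Ψ - (inner ℂ v Ψ : ℂ) • v‖ ^ 2) * ωm + ‖Ψ - (inner ℂ v Ψ : ℂ) • v‖ ^ 2 * ωp
        - 2 * ‖Ψ - (inner ℂ v Ψ : ℂ) • v‖ * Real.sqrt (1 - ‖Ψ - (inner ℂ v Ψ : ℂ) • v‖ ^ 2) * b
      ≤ ((inner ℂ Ψ (H Ψ) : ℂ)).re := by
  intro Ψ hΨ
  set a : ℂ := (inner ℂ v Ψ : ℂ) with ha
  set φ : V := Ψ - a • v with hφ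
  have hvv : (inner ℂ v v : ℂ) = 1 := by
    rw [inner_self_eq_norm_sq_to_K, hv]; norm_num
  have hvφ : (inner ℂ v φ : ℂ) = 0 := by
    rw [hφ, inner_sub_right, inner_smul_right, hvv, mul_one, sub_self]
  set c : ℝ := ‖φ‖ with hc
  have hΨeq : Ψ = a • v + φ := by rw [hφ]; abel
  have hpyth : ‖a‖ ^ 2 = 1 - c ^ 2 := by
    have h1 : ‖a • v + φ‖ ^ 2 = ‖a • v‖ ^ 2 + 2 * ((inner ℂ (a • v) φ : ℂ)).re + ‖φ‖ ^ 2 :=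
      norm_add_sq (𝕜 := ℂ) _ _
    have h2 : (inner ℂ (a • v) φ : ℂ) = 0 := by
      rw [inner_smul_left, hvφ, mul_zero]
    rw [← hΨeq, hΨ, h2, norm_smul, hv, mul_one] at h1
    simp only [Complex.zero_re, mul_zero, add_zero, one_pow] at h1
    linarith
  have hna : ‖a‖ = Real.sqrt (1 - c ^ 2) := by
    rw [← hpyth, Real.sqrt_sq (norm_nonneg a)]
  set z : ℂ := (inner ℂ v (H φ) : ℂ) with hz
  have hsym : (inner ℂ φ (H v) : ℂ) = starRingEnd ℂ z := by
    rw [hz, ← hH v φ, ← inner_conj_symm]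
  have hexpand : (inner ℂ Ψ (H Ψ) : ℂ) =
      (starRingEnd ℂ a) * a * ωm + (starRingEnd ℂ a) * z + a * (starRingEnd ℂ z)
        + inner ℂ φ (H φ) := by
    conv_lhs => rw [hΨeq]
    rw [map_add, inner_add_left, inner_add_right, inner_add_right,
        map_smul, inner_smul_left, inner_smul_left, inner_smul_right,
        inner_smul_right, hdiag, hsym, ← hz]
    ring
  have hre : ((inner ℂ Ψ (H Ψ) : ℂ)).re
      = ‖a‖ ^ 2 * ωm + 2 * ((starRingEnd ℂ a) * z).re + ((inner ℂ φ (H φ) : ℂ)).re := by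
    rw [hexpand]
    simp only [Complex.add_re, Complex.mul_re, Complex.mul_im, Complex.conj_re,
      Complex.conj_im, Complex.ofReal_re, Complex.ofReal_im,
      Complex.sq_norm, Complex.normSq_apply]
    ring
  have hz_bound : ‖z‖ ≤ b * c := hoff φ hvφ
  have hcross : -(‖a‖ * (b * c)) ≤ ((starRingEnd ℂ a) * z).re := by
    have h1 : |((starRingEnd ℂ a) * z).re| ≤ ‖(starRingEnd ℂ a) * z‖ :=
      Complex.abs_re_le_norm _
    have h2 : ‖(starRingEnd ℂ a) * z‖ = ‖a‖ * ‖z‖ := by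
      rw [norm_mul, Complex.norm_conj]
    have h3 : ‖a‖ * ‖z‖ ≤ ‖a‖ * (b * c) :=
      mul_le_mul_of_nonneg_left hz_bound (norm_nonneg a)
    have := neg_abs_le (((starRingEnd ℂ a) * z).re)
    linarith
  have hφφ : ωp * c ^ 2 ≤ ((inner ℂ φ (H φ) : ℂ)).re := hperp φ hvφ
  rw [hre, ← hna, ← hpyth]
  nlinarith [norm_nonneg a, norm_nonneg φ]
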